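/- Assumption (*) of the context holds with the following choices of pairwise distinct α's and β's: (1) s = r = 1 with (α_1, β_1) = (1, 0); (2) s = 2, r = 1 with (α_1, α_2, β_1) = (1, −n_1/n_2, 0); (3) s = 1, r = 2 with (α_1, β_1, β_2) = (0, 1, −m_1/m_2); (4) s = 3, r = 1 with (α_1, α_2, α_3, β_1) = ((t+2)/4, −(t−2)/4, 1, 0), provided p ∤ (t+2), p ∤ (t−2) and (n_1, n_2, n_3) = (p−2, 2, t); (5) s = r = 2 with (α_1, α_2, β_1, β_2) = (1, (n_2−n_1)/(2n_2), 0, t/(2n_2)), provided n_i ≡ m_i (mod p) for i = 1, 2 and n_1 ≠ n_2 in k. In each case the listed elements of k are pairwise distinct and the polynomial g(y) is a nonzero constant. -/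

import Mathlib

open Polynomial

namespace IC

/-- The polynomial `g(y)` of Assumption (*):
`g(y) = ∏_l (y−β_l) · (Σ_i n_i ∏_{j≠i} (y−α_j)) − ∏_i (y−α_i) · (Σ_l m_l ∏_{u≠l} (y−β_u))`,
where the integers `n i`, `m l` are regarded in `k` via the canonical map. -/
noncomputable def gPoly {k : Type} [Field k] {s r : ℕ}
    (n : Fin s → ℕ) (m : Fin r → ℕ) (α : Fin s → k) (β : Fin r → k) : Polynomial k :=
  (∏ l, (X - C (β l))) *
      (∑ i, C ((n i : k)) * ∏ j ∈ Finset.univ.erase i, (X - C (α j))) -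
    (∏ i, (X - C (α i))) *
      (∑ l, C ((m l : k)) * ∏ u ∈ Finset.univ.erase l, (X - C (β u)))

/-- Assumption (*): the elements `α 1, …, α s, β 1, …, β r` of `k` are pairwise distinct
and the polynomial `g(y)` is a nonzero constant in `k[y]`. -/
def AssumptionStar {k : Type} [Field k] {s r : ℕ}
    (n : Fin s → ℕ) (m : Fin r → ℕ) (α : Fin s → k) (β : Fin r → k) : Prop :=
  Function.Injective (Sum.elim α β) ∧ ∃ c : k, c ≠ 0 ∧ gPoly n m α β = C c

end IC

private lemma inj11 {k : Type} [Field k] (a c : k) (h1 : a ≠ c) :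
    Function.Injective (Sum.elim ![a] ![c]) := by
  intro x y hxy
  rcases x with x | x <;> rcases y with y | y <;> fin_cases x <;> fin_cases y <;> simp_all

private lemma inj21 {k : Type} [Field k] (a b c : k) (h1 : a ≠ b) (h2 : a ≠ c) (h3 : b ≠ c) :
    Function.Injective (Sum.elim ![a, b] ![c]) := by
  intro x y hxy
  rcases x with x | x <;> rcases y with y | y <;> fin_cases x <;> fin_cases y <;> simp_all

private lemma inj12 {k : Type} [Field k] (a c d : k) (h1 : a ≠ c) (h2 : a ≠ d) (h3 : c ≠ d) :
    Function.Injective (Sum.elim ![a] ![c, d]) := by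
  intro x y hxy
  rcases x with x | x <;> rcases y with y | y <;> fin_cases x <;> fin_cases y <;> simp_all

private lemma inj31 {k : Type} [Field k] (a b c d : k) (h1 : a ≠ b) (h2 : a ≠ c)
    (h3 : b ≠ c) (h4 : a ≠ d) (h5 : b ≠ d) (h6 : c ≠ d) :
    Function.Injective (Sum.elim ![a, b, c] ![d]) := by
  intro x y hxy
  rcases x with x | x <;> rcases y with y | y <;> fin_cases x <;> fin_cases y <;> simp_all

private lemma inj22 {k : Type} [Field k] (a b c d : k) (h1 : a ≠ b) (h2 : a ≠ c)
    (h3 : b ≠ c) (h4 : a ≠ d) (h5 : b ≠ d) (h6 : c ≠ d) :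
    Function.Injective (Sum.elim ![a, b] ![c, d]) := by
  intro x y hxy
  rcases x with x | x <;> rcases y with y | y <;> fin_cases x <;> fin_cases y <;> simp_all

set_option maxHeartbeats 1000000 in
/-- **Lemma.**  Over an algebraically closed field `k` of odd characteristic `p`,
Assumption (*) holds with the following choices of pairwise distinct `α`'s and `β`'s
(with `t ≥ 1` coprime to `p`, `p + t ≥ 5`, all `n`'s and `m`'s positive and coprime to `p`,
`Σ n_i = p + t` and `Σ m_l = t`):
(1) `s = r = 1` with `(α₁, β₁) = (1, 0)`;
(2) `s = 2`, `r = 1` with `(α₁, α₂, β₁) = (1, −n₁/n₂, 0)`;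
(3) `s = 1`, `r = 2` with `(α₁, β₁, β₂) = (0, 1, −m₁/m₂)`;
(4) `s = 3`, `r = 1` with `(α₁, α₂, α₃, β₁) = ((t+2)/4, −(t−2)/4, 1, 0)`, provided
    `p ∤ (t+2)`, `p ∤ (t−2)` and `(n₁, n₂, n₃) = (p−2, 2, t)`;
(5) `s = r = 2` with `(α₁, α₂, β₁, β₂) = (1, (n₂−n₁)/(2n₂), 0, t/(2n₂))`, provided
    `n_i ≡ m_i (mod p)` for `i = 1, 2` and `n₁ ≠ n₂` in `k`. -/
theorem assumptionStar_holds
    (p : ℕ) (hp : p.Prime) (hodd : Odd p)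
    (k : Type) [Field k] [IsAlgClosed k] [CharP k p] :
    (∀ t : ℕ, 1 ≤ t → ¬ p ∣ t → 5 ≤ p + t →
      IC.AssumptionStar (k := k) ![p + t] ![t] ![(1 : k)] ![(0 : k)]) ∧
    (∀ t n₁ n₂ : ℕ, 1 ≤ t → ¬ p ∣ t → 5 ≤ p + t →
      0 < n₁ → 0 < n₂ → ¬ p ∣ n₁ → ¬ p ∣ n₂ → n₁ + n₂ = p + t →
      IC.AssumptionStar (k := k) ![n₁, n₂] ![t]
        ![(1 : k), -(n₁ : k) / (n₂ : k)] ![(0 : k)]) ∧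
    (∀ t m₁ m₂ : ℕ, 1 ≤ t → ¬ p ∣ t → 5 ≤ p + t →
      0 < m₁ → 0 < m₂ → ¬ p ∣ m₁ → ¬ p ∣ m₂ → m₁ + m₂ = t →
      IC.AssumptionStar (k := k) ![p + t] ![m₁, m₂]
        ![(0 : k)] ![(1 : k), -(m₁ : k) / (m₂ : k)]) ∧
    (∀ t : ℕ, 1 ≤ t → ¬ p ∣ t → 5 ≤ p + t →
      ¬ ((p : ℤ) ∣ ((t : ℤ) + 2)) → ¬ ((p : ℤ) ∣ ((t : ℤ) - 2)) →
      IC.AssumptionStar (k := k) ![p - 2, 2, t] ![t]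
        ![((t : k) + 2) / 4, -((t : k) - 2) / 4, (1 : k)] ![(0 : k)]) ∧
    (∀ t n₁ n₂ m₁ m₂ : ℕ, 1 ≤ t → ¬ p ∣ t → 5 ≤ p + t →
      0 < n₁ → 0 < n₂ → 0 < m₁ → 0 < m₂ →
      ¬ p ∣ n₁ → ¬ p ∣ n₂ → ¬ p ∣ m₁ → ¬ p ∣ m₂ →
      n₁ + n₂ = p + t → m₁ + m₂ = t →
      n₁ % p = m₁ % p → n₂ % p = m₂ % p → (n₁ : k) ≠ (n₂ : k) →
      IC.AssumptionStar (k := k) ![n₁, n₂] ![m₁, m₂]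
        ![(1 : k), ((n₂ : k) - (n₁ : k)) / (2 * (n₂ : k))]
        ![(0 : k), (t : k) / (2 * (n₂ : k))]) := by
  have hpk : (p : k) = 0 := CharP.cast_eq_zero k p
  have hp2 : p ≠ 2 := by rintro rfl; simp [Nat.odd_iff] at hodd
  have hcast : ∀ a : ℕ, ¬ p ∣ a → (a : k) ≠ 0 := fun a ha => by
    rw [Ne, CharP.cast_eq_zero_iff k p]; exact ha
  have h2k : (2 : k) ≠ 0 := by
    have := hcast 2 (fun h => hp2 ((Nat.prime_dvd_prime_iff_eq hp Nat.prime_two).mp h))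
    exact_mod_cast this
  refine ⟨?_, ?_, ?_, ?_, ?_⟩
  · -- case 1
    intro t ht hpt h5
    have htk : (t : k) ≠ 0 := hcast t hpt
    refine ⟨inj11 _ _ one_ne_zero, (t : k), htk, ?_⟩
    apply Polynomial.funext
    intro y
    simp only [IC.gPoly, Fin.sum_univ_one, Fin.prod_univ_one,
      show (Finset.univ.erase (0 : Fin 1)) = ∅ from by decide, Finset.prod_empty,
      Matrix.cons_val_zero, eval_mul, eval_sub, eval_add, eval_prod, eval_X, eval_C,
      eval_one, mul_one]
    push_cast
    rw [hpk]; ring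
  · -- case 2
    intro t n₁ n₂ ht hpt h5 hn₁ hn₂ hpn₁ hpn₂ hsum
    have htk : (t : k) ≠ 0 := hcast t hpt
    have hn₁k : (n₁ : k) ≠ 0 := hcast n₁ hpn₁
    have hn₂k : (n₂ : k) ≠ 0 := hcast n₂ hpn₂
    have hs : (n₁ : k) + n₂ = t := by
      have : ((n₁ + n₂ : ℕ) : k) = ((p + t : ℕ) : k) := by rw [hsum]
      push_cast at this; rw [hpk] at this; linear_combination this
    have hd0 : -(n₁ : k) / n₂ ≠ 0 := div_ne_zero (neg_ne_zero.mpr hn₁k) hn₂k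
    have hd1 : -(n₁ : k) / n₂ ≠ 1 := by
      intro h
      rw [div_eq_iff hn₂k, one_mul] at h
      exact htk (by linear_combination -hs - h)
    refine ⟨inj21 _ _ _ (Ne.symm hd1) one_ne_zero hd0, ?_⟩
    · refine ⟨(n₁ : k) * t / n₂, div_ne_zero (mul_ne_zero hn₁k htk) hn₂k, ?_⟩
      apply Polynomial.funext
      intro y
      simp only [IC.gPoly, Fin.sum_univ_one, Fin.prod_univ_one, Fin.sum_univ_two,
        Fin.prod_univ_two,
        show (Finset.univ.erase (0 : Fin 1)) = ∅ from by decide,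
        show (Finset.univ.erase (0 : Fin 2)) = {1} from by decide,
        show (Finset.univ.erase (1 : Fin 2)) = {0} from by decide,
        Finset.prod_empty, Finset.prod_singleton,
        Matrix.cons_val_zero, Matrix.cons_val_one, Matrix.head_cons,
        eval_mul, eval_sub, eval_add, eval_X, eval_C, eval_one, mul_one]
      field_simp
      linear_combination (y^2*(n₂:k) + y*n₁ + n₁*n₂ - y*n₂ - n₁*n₂) * hs
  · -- case 3
    intro t m₁ m₂ ht hpt h5 hm₁ hm₂ hpm₁ hpm₂ hsum
    have htk : (t : k) ≠ 0 := hcast t hpt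
    have hm₁k : (m₁ : k) ≠ 0 := hcast m₁ hpm₁
    have hm₂k : (m₂ : k) ≠ 0 := hcast m₂ hpm₂
    have hs : (m₁ : k) + m₂ = t := by exact_mod_cast congrArg (Nat.cast : ℕ → k) hsum
    have hd0 : -(m₁ : k) / m₂ ≠ 0 := div_ne_zero (neg_ne_zero.mpr hm₁k) hm₂k
    have hd1 : -(m₁ : k) / m₂ ≠ 1 := by
      intro h
      rw [div_eq_iff hm₂k, one_mul] at h
      exact htk (by linear_combination -hs - h)
    refine ⟨inj12 _ _ _ one_ne_zero.symm (Ne.symm hd0) (Ne.symm hd1), ?_⟩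
    · refine ⟨-((t : k) * m₁) / m₂,
        div_ne_zero (neg_ne_zero.mpr (mul_ne_zero htk hm₁k)) hm₂k, ?_⟩
      apply Polynomial.funext
      intro y
      simp only [IC.gPoly, Fin.sum_univ_one, Fin.prod_univ_one, Fin.sum_univ_two,
        Fin.prod_univ_two,
        show (Finset.univ.erase (0 : Fin 1)) = ∅ from by decide,
        show (Finset.univ.erase (0 : Fin 2)) = {1} from by decide,
        show (Finset.univ.erase (1 : Fin 2)) = {0} from by decide,
        Finset.prod_empty, Finset.prod_singleton,
        Matrix.cons_val_zero, Matrix.cons_val_one, Matrix.head_cons,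
        eval_mul, eval_sub, eval_add, eval_X, eval_C, eval_one, mul_one]
      push_cast
      rw [hpk, ← hs]
      field_simp
      ring
  · -- case 4
    intro t ht hpt h5 hpt2 hpt2'
    have htk : (t : k) ≠ 0 := hcast t hpt
    have ht2 : (t : k) + 2 ≠ 0 := by
      intro h
      apply hpt2
      rw [← CharP.intCast_eq_zero_iff k p]
      push_cast
      linear_combination h
    have ht2' : (t : k) - 2 ≠ 0 := by
      intro h
      apply hpt2'
      rw [← CharP.intCast_eq_zero_iff k p]
      push_cast
      linear_combination h
    have h4k : (4 : k) ≠ 0 := by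
      have : (4 : k) = 2 ^ 2 := by norm_num
      rw [this]; exact pow_ne_zero _ h2k
    have hp3 : 2 ≤ p := hp.two_le
    have hpc : ((p - 2 : ℕ) : k) = -2 := by
      rw [Nat.cast_sub hp3, hpk]; ring
    have hA0 : ((t : k) + 2) / 4 ≠ 0 := div_ne_zero ht2 h4k
    have hB0 : -((t : k) - 2) / 4 ≠ 0 := div_ne_zero (neg_ne_zero.mpr ht2') h4k
    have hA1 : ((t : k) + 2) / 4 ≠ 1 := by
      intro h
      rw [div_eq_iff h4k, one_mul] at h
      exact ht2' (by linear_combination h)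
    have hB1 : -((t : k) - 2) / 4 ≠ 1 := by
      intro h
      rw [div_eq_iff h4k, one_mul] at h
      exact ht2 (by linear_combination -h)
    have hAB : ((t : k) + 2) / 4 ≠ -((t : k) - 2) / 4 := by
      intro h
      rw [div_eq_div_iff h4k h4k] at h
      apply htk
      have h8k : (8 : k) ≠ 0 := by
        have : (8 : k) = 2 ^ 3 := by norm_num
        rw [this]; exact pow_ne_zero _ h2k
      have h8t : (8 : k) * t = 0 := by linear_combination h
      rcases mul_eq_zero.mp h8t with h' | h'
      exacts [absurd h' h8k, h']
    refine ⟨inj31 _ _ _ _ hAB hA1 hB1 hA0 hB0 one_ne_zero, ?_⟩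
    · have h16 : (16 : k) ≠ 0 := by
        have : (16 : k) = 2 ^ 4 := by norm_num
        rw [this]; exact pow_ne_zero _ h2k
      refine ⟨-((t : k) * ((t : k) + 2) * ((t : k) - 2)) / 16,
        div_ne_zero (neg_ne_zero.mpr (mul_ne_zero (mul_ne_zero htk ht2) ht2')) h16, ?_⟩
      apply Polynomial.funext
      intro y
      simp only [IC.gPoly, Fin.sum_univ_one, Fin.prod_univ_one, Fin.sum_univ_three,
        Fin.prod_univ_three,
        show (Finset.univ.erase (0 : Fin 1)) = ∅ from by decide,
        show (Finset.univ.erase (0 : Fin 3)) = {1, 2} from by decide,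
        show (Finset.univ.erase (1 : Fin 3)) = {0, 2} from by decide,
        show (Finset.univ.erase (2 : Fin 3)) = {0, 1} from by decide,
        show ((1 : Fin 3) ∉ ({2} : Finset (Fin 3))) from by decide,
        show ((0 : Fin 3) ∉ ({2} : Finset (Fin 3))) from by decide,
        show ((0 : Fin 3) ∉ ({1} : Finset (Fin 3))) from by decide,
        Finset.prod_empty, Finset.prod_singleton, Finset.prod_insert,
        Matrix.cons_val_zero, Matrix.cons_val_one, Matrix.head_cons,
        Matrix.cons_val_two, Matrix.tail_cons,
        eval_mul, eval_sub, eval_add, eval_X, eval_C, eval_one, mul_one]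
      simp only [Finset.prod_pair (show (1 : Fin 3) ≠ 2 by decide),
        Finset.prod_pair (show (0 : Fin 3) ≠ 2 by decide),
        Finset.prod_pair (show (0 : Fin 3) ≠ 1 by decide),
        eval_mul, eval_sub, eval_X, eval_C, Matrix.cons_val_zero, Matrix.cons_val_one,
        Matrix.head_cons, Matrix.cons_val_two, Matrix.tail_cons]
      rw [hpc]
      field_simp
      ring
  · -- case 5
    intro t n₁ n₂ m₁ m₂ ht hpt h5 hn₁ hn₂ hm₁ hm₂ hpn₁ hpn₂ hpm₁ hpm₂ hsumn hsumm
      hmod₁ hmod₂ hne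
    haveI : Fact p.Prime := ⟨hp⟩
    have htk : (t : k) ≠ 0 := hcast t hpt
    have hn₁k : (n₁ : k) ≠ 0 := hcast n₁ hpn₁
    have hn₂k : (n₂ : k) ≠ 0 := hcast n₂ hpn₂
    have hm1 : (m₁ : k) = n₁ := ((CharP.natCast_eq_natCast k p).mpr hmod₁.symm)
    have hm2 : (m₂ : k) = n₂ := ((CharP.natCast_eq_natCast k p).mpr hmod₂.symm)
    have hs : (n₁ : k) + n₂ = t := by
      have : ((n₁ + n₂ : ℕ) : k) = ((p + t : ℕ) : k) := by rw [hsumn]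
      push_cast at this; rw [hpk] at this; linear_combination this
    have hsub : (n₂ : k) - n₁ ≠ 0 := sub_ne_zero.mpr (Ne.symm hne)
    have h2n₂ : (2 : k) * n₂ ≠ 0 := mul_ne_zero h2k hn₂k
    have hα0 : ((n₂ : k) - n₁) / (2 * n₂) ≠ 0 := div_ne_zero hsub h2n₂
    have hα1 : ((n₂ : k) - n₁) / (2 * n₂) ≠ 1 := by
      intro h
      rw [div_eq_iff h2n₂, one_mul] at h
      exact htk (by linear_combination -hs - h)
    have hβ0 : (t : k) / (2 * n₂) ≠ 0 := div_ne_zero htk h2n₂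
    have hβ1 : (t : k) / (2 * n₂) ≠ 1 := by
      intro h
      rw [div_eq_iff h2n₂, one_mul] at h
      exact hsub (by linear_combination -h - hs)
    have hαβ : ((n₂ : k) - n₁) / (2 * n₂) ≠ (t : k) / (2 * n₂) := by
      intro h
      rw [div_eq_div_iff h2n₂ h2n₂] at h
      apply hn₁k
      have h4n : (4 : k) * n₂ * n₁ = 0 := by linear_combination ((2:k)*n₂) * hs - h
      have h4n₂ : (4 : k) * (n₂ : k) ≠ 0 := by
        have : (4 : k) * n₂ = 2 * (2 * n₂) := by ring
        rw [this]; exact mul_ne_zero h2k h2n₂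
      rcases mul_eq_zero.mp (by linear_combination h4n : ((4:k) * n₂) * n₁ = 0) with h' | h'
      exacts [absurd h' h4n₂, h']
    refine ⟨inj22 _ _ _ _ (Ne.symm hα1) one_ne_zero hα0 (Ne.symm hβ1) hαβ
      (Ne.symm hβ0), ?_⟩
    · refine ⟨(n₁ : k) * t * ((n₂ : k) - n₁) / (4 * (n₂ : k) ^ 2),
        div_ne_zero (mul_ne_zero (mul_ne_zero hn₁k htk) hsub)
          (by
            have : (4 : k) * (n₂ : k) ^ 2 = (2 * n₂) ^ 2 := by ring
            rw [this]; exact pow_ne_zero _ h2n₂), ?_⟩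
      apply Polynomial.funext
      intro y
      simp only [IC.gPoly, Fin.sum_univ_two, Fin.prod_univ_two,
        show (Finset.univ.erase (0 : Fin 2)) = {1} from by decide,
        show (Finset.univ.erase (1 : Fin 2)) = {0} from by decide,
        Finset.prod_singleton,
        Matrix.cons_val_zero, Matrix.cons_val_one, Matrix.head_cons,
        eval_mul, eval_sub, eval_add, eval_X, eval_C, eval_one, mul_one]
      have h4k : (4 : k) ≠ 0 := by
        have : (4 : k) = 2 ^ 2 := by norm_num
        rw [this]; exact pow_ne_zero _ h2k
      rw [hm1, hm2, ← hs]
      field_simp [h4k]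
      ring
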